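/- Let G be a connected graph with σ₂(G) ≥ |V(G)| - k (k ≥ 2) and no spanning tree with at most k leaves, and let P be a longest path with endpoint v. Then no two distinct neighbors of v are consecutive on P (i.e., for distinct y, z ∈ N(v), yz is not an edge of P). -/

import Mathlib

open SimpleGraph

/-- The degree of a vertex, as the cardinality of its neighbor set. -/
noncomputable def SimpleGraph.deg' {V : Type*} (G : SimpleGraph V) (u : V) : ℕ :=
  (G.neighborSet u).ncard

/-- `G` has a spanning tree with at most `k` leaves. -/
def SimpleGraph.HasSpanningKEndedTree {V : Type*} (G : SimpleGraph V) (k : ℕ) : Prop :=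
  ∃ T : SimpleGraph V, T ≤ G ∧ T.IsTree ∧ {x : V | (T.neighborSet x).ncard = 1}.ncard ≤ k

set_option linter.unusedSectionVars false
set_option linter.unusedVariables false
set_option maxHeartbeats 1000000
namespace Aux14

variable {V : Type*} [Fintype V] {G : SimpleGraph V}

lemma chain_walk (g : ℕ → V) (N : ℕ) (hadj : ∀ j < N, G.Adj (g j) (g (j+1))) :
    ∃ q : G.Walk (g 0) (g N), q.length = N ∧ q.support = (List.range (N+1)).map g := by
  induction N with
  | zero => exact ⟨Walk.nil, rfl, rfl⟩
  | succ n ih =>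
    obtain ⟨q, hlen, hsup⟩ := ih (fun j hj => hadj j (by omega))
    refine ⟨q.concat (hadj n (by omega)), ?_, ?_⟩
    · simp [Walk.length_concat, hlen]
    · rw [Walk.support_concat, hsup, List.range_succ (n := n+1),
        List.map_append]
      simp

lemma boundary_edge (S : Set V) {w₀ u : V} (hw : w₀ ∉ S) (hu : u ∈ S) (hr : G.Reachable w₀ u) :
    ∃ x y, x ∉ S ∧ y ∈ S ∧ G.Adj x y := by
  obtain ⟨q⟩ := hr
  induction q with
  | nil => exact absurd hu hw
  | @cons a b c hadj q ih =>
    by_cases hb : b ∈ S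
    · exact ⟨a, b, hw, hb, hadj⟩
    · exact ih hb hu


lemma kill_template (L : ℕ) (S : Set V) (g : ℕ → V)
    (hgS : ∀ j ≤ L, g j ∈ S)
    (KILL : ∀ g' : ℕ → V, (∀ j < L + 1, G.Adj (g' j) (g' (j+1))) →
      Set.InjOn g' (Set.Iic (L+1)) → False)
    (w : V) (hw : w ∉ S) (σ : ℕ → ℕ) (hσran : ∀ t ≤ L, σ t ≤ L)
    (hσinj : ∀ a ≤ L, ∀ b ≤ L, σ a = σ b → a = b)
    (hadj : ∀ t < L, G.Adj (g (σ t)) (g (σ (t+1))))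
    (hstart : G.Adj w (g (σ 0))) (hginj : Set.InjOn g (Set.Iic L)) : False := by
  apply KILL (fun t => if t = 0 then w else g (σ (t-1)))
  · intro j hj
    by_cases h0 : j = 0
    · subst h0; simpa using hstart
    · have hj1 : j - 1 < L := by omega
      simp only [h0, if_neg, reduceIte, Nat.add_eq_zero, one_ne_zero, and_false]
      have e : j + 1 - 1 = (j - 1) + 1 := by omega
      rw [e]
      exact hadj (j-1) hj1
  · intro a ha b hb hab
    simp only [Set.mem_Iic] at ha hb
    by_cases ha0 : a = 0 <;> by_cases hb0 : b = 0
    · omega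
    · simp only [ha0, hb0, reduceIte] at hab
      exact absurd (hab ▸ hgS (σ (b-1)) (hσran (b-1) (by omega))) hw
    · simp only [ha0, hb0, reduceIte] at hab
      exact absurd (hab ▸ hgS (σ (a-1)) (hσran (a-1) (by omega))) hw
    · simp only [ha0, hb0, reduceIte] at hab
      have := hginj (Set.mem_Iic.2 (hσran (a-1) (by omega))) (Set.mem_Iic.2 (hσran (b-1) (by omega))) hab
      have := hσinj (a-1) (by omega) (b-1) (by omega) this
      omega

lemma enum_surj (S : Set V) (L : ℕ) (g : ℕ → V) (hginj : Set.InjOn g (Set.Iic L))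
    (hgS : ∀ j ≤ L, g j ∈ S) (hScard : S.ncard = L + 1) : ∀ x ∈ S, ∃ j ≤ L, g j = x := by
  have hsub : g '' Set.Iic L ⊆ S := by
    rintro x ⟨j, hj, rfl⟩
    exact hgS j (Set.mem_Iic.1 hj)
  have hIic : (Set.Iic L).ncard = L + 1 := by
    rw [← Finset.coe_Iic, Set.ncard_coe_finset, Nat.card_Iic]
  have himg : g '' Set.Iic L = S := by
    apply Set.eq_of_subset_of_ncard_le hsub _ (Set.toFinite S)
    rw [Set.ncard_image_of_injOn hginj, hIic, hScard]
  intro x hx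
  rw [← himg] at hx
  obtain ⟨j, hj, rfl⟩ := hx
  exact ⟨j, Set.mem_Iic.1 hj, rfl⟩

lemma xor_partition {L : ℕ} (A B : Set ℕ) (hA : A ⊆ Set.Icc 1 L) (hB : B ⊆ Set.Icc 1 L)
    (hdisj : ∀ j, j ∈ A → j ∈ B → False) (hsum : L ≤ A.ncard + B.ncard) :
    ∀ j, 1 ≤ j → j ≤ L → (j ∈ A ↔ j ∉ B) := by
  have hIccfin : (Set.Icc 1 L).Finite := Set.finite_Icc _ _
  have hAfin : A.Finite := hIccfin.subset hA
  have hBfin : B.Finite := hIccfin.subset hB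
  have hd : Disjoint A B := Set.disjoint_left.2 (fun j ha hb => hdisj j ha hb)
  have hcard : (A ∪ B).ncard = A.ncard + B.ncard := Set.ncard_union_eq hd hAfin hBfin
  have hIcc_card : (Set.Icc 1 L).ncard = L := by
    rw [← Finset.coe_Icc, Set.ncard_coe_finset, Nat.card_Icc]
    omega
  have hsub : A ∪ B ⊆ Set.Icc 1 L := Set.union_subset hA hB
  have : A ∪ B = Set.Icc 1 L := Set.eq_of_subset_of_ncard_le hsub (by omega) hIccfin
  intro j h1 h2
  constructor
  · intro ha hb; exact hdisj j ha hb
  · intro hb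
    have : j ∈ A ∪ B := this ▸ Set.mem_Icc.2 ⟨h1, h2⟩
    exact this.resolve_right hb

lemma pe_partition (k L : ℕ) (S : Set V) (u : V) (g : ℕ → V) (b w : V)
    (hadjg : ∀ j < L, G.Adj (g j) (g (j+1)))
    (hginj : Set.InjOn g (Set.Iic L))
    (hgS : ∀ j ≤ L, g j ∈ S)
    (hgsurj : ∀ x ∈ S, ∃ j ≤ L, g j = x)
    (hgL : g L = b) (hLpos : 1 ≤ L)
    (hNwS : ∀ x, G.Adj w x → x ∈ S) (hNw0 : ¬G.Adj w (g 0))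
    (hNbS : ∀ x, G.Adj b x → x ∈ S)
    (hdisj : ∀ j, 1 ≤ j → j ≤ L → G.Adj w (g j) → G.Adj b (g (j-1)) → False) :
    ¬G.Adj w b ∧ G.deg' w + G.deg' b ≤ L ∧
      (L ≤ G.deg' w + G.deg' b →
        ∀ j, 1 ≤ j → j ≤ L → (G.Adj w (g j) ↔ ¬ G.Adj b (g (j-1)))) := by
  have hbL : G.Adj b (g (L-1)) := by
    have := hadjg (L-1) (by omega)
    rw [show L - 1 + 1 = L by omega, hgL] at this
    exact this.symm
  have hnadj : ¬G.Adj w b := by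
    intro h
    exact hdisj L hLpos le_rfl (by rw [hgL]; exact h) hbL
  set A := {j | 1 ≤ j ∧ j ≤ L ∧ G.Adj w (g j)} with hA
  set B := {j | 1 ≤ j ∧ j ≤ L ∧ G.Adj b (g (j-1))} with hB
  have hAsub : A ⊆ Set.Icc 1 L := fun j hj => Set.mem_Icc.2 ⟨hj.1, hj.2.1⟩
  have hBsub : B ⊆ Set.Icc 1 L := fun j hj => Set.mem_Icc.2 ⟨hj.1, hj.2.1⟩
  have hAim : g '' A = G.neighborSet w := by
    ext x
    constructor
    · rintro ⟨j, ⟨_, _, hj3⟩, rfl⟩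
      exact hj3
    · intro hx
      have hxS : x ∈ S := hNwS x hx
      obtain ⟨j, hjL, rfl⟩ := hgsurj x hxS
      have hj0 : j ≠ 0 := by
        rintro rfl
        exact hNw0 hx
      exact ⟨j, ⟨by omega, hjL, hx⟩, rfl⟩
  have hBim : (fun j => g (j-1)) '' B = G.neighborSet b := by
    ext x
    constructor
    · rintro ⟨j, ⟨_, _, hj3⟩, rfl⟩
      exact hj3
    · intro hx
      have hxS : x ∈ S := hNbS x hx
      obtain ⟨j', hjL, rfl⟩ := hgsurj x hxS
      have hj0 : j' ≠ L := by
        rintro rfl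
        exact hx.ne' hgL
      exact ⟨j' + 1, ⟨by omega, by omega, by simpa using hx⟩, by simp⟩
  have hAcard : A.ncard = G.deg' w := by
    rw [SimpleGraph.deg', ← hAim]
    exact (Set.ncard_image_of_injOn (fun x hx y hy hxy =>
      hginj (Set.mem_Iic.2 (hAsub hx).2) (Set.mem_Iic.2 (hAsub hy).2) hxy)).symm
  have hBcard : B.ncard = G.deg' b := by
    rw [SimpleGraph.deg', ← hBim]
    refine (Set.ncard_image_of_injOn ?_).symm
    intro x hx y hy hxy
    have := hginj (Set.mem_Iic.2 (by have := (hBsub hx).2; omega : x - 1 ≤ L))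
      (Set.mem_Iic.2 (by have := (hBsub hy).2; omega : y - 1 ≤ L)) hxy
    have hx1 := (hBsub hx).1
    have hy1 := (hBsub hy).1
    omega
  have hdisj' : ∀ j, j ∈ A → j ∈ B → False := by
    intro j hjA hjB
    exact hdisj j hjA.1 hjA.2.1 hjA.2.2 hjB.2.2
  have hd : Disjoint A B := Set.disjoint_left.2 (fun j ha hb => hdisj' j ha hb)
  have hIccfin : (Set.Icc 1 L).Finite := Set.finite_Icc _ _
  have hsumle : A.ncard + B.ncard ≤ L := by
    rw [← Set.ncard_union_eq hd (hIccfin.subset hAsub) (hIccfin.subset hBsub)]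
    calc (A ∪ B).ncard ≤ (Set.Icc 1 L).ncard :=
          Set.ncard_le_ncard (Set.union_subset hAsub hBsub) hIccfin
      _ = L := by rw [← Finset.coe_Icc, Set.ncard_coe_finset, Nat.card_Icc]; omega
  refine ⟨hnadj, by omega, ?_⟩
  intro hge j hj1 hjL
  have hxor := xor_partition A B hAsub hBsub hdisj' (by omega) j hj1 hjL
  constructor
  · intro hw'
    have : j ∈ A := ⟨hj1, hjL, hw'⟩
    intro hb'
    exact hdisj' j this ⟨hj1, hjL, hb'⟩
  · intro hb'
    have : j ∉ B := fun hjB => hb' hjB.2.2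
    have : j ∈ A := hxor.2 this
    exact this.2.2

section kills
variable (L : ℕ) (S : Set V) (g : ℕ → V)
  (KILL : ∀ g' : ℕ → V, (∀ j < L + 1, G.Adj (g' j) (g' (j+1))) →
      Set.InjOn g' (Set.Iic (L+1)) → False)
  (hadjg : ∀ j < L, G.Adj (g j) (g (j+1)))
  (hginj : Set.InjOn g (Set.Iic L))
  (hgS : ∀ j ≤ L, g j ∈ S)

include KILL hadjg hginj hgS in
lemma end_ext : ∀ x, x ∉ S → ¬ G.Adj (g L) x := by
  intro x hxS hadj
  apply kill_template L S g hgS KILL x hxS (fun t => L - t)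
  · intro t _; omega
  · intro a ha b hb h; omega
  · intro t ht
    have e : L - t = (L - (t+1)) + 1 := by omega
    rw [e]
    exact (hadjg (L - (t+1)) (by omega)).symm
  · simpa using hadj.symm
  · exact hginj

include KILL hadjg hginj hgS in
lemma start_ext : ∀ x, x ∉ S → ¬ G.Adj x (g 0) := by
  intro x hxS hadj
  apply kill_template L S g hgS KILL x hxS (fun t => t)
  · intro t ht; omega
  · intro a _ b _ h; omega
  · intro t ht; exact hadjg t ht
  · exact hadj
  · exact hginj

include KILL hadjg hginj hgS in
lemma k4 (w : V) (hw : w ∉ S) (j : ℕ) (hj1 : 1 ≤ j) (hjL : j ≤ L)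
    (h1 : G.Adj w (g j)) (h2 : G.Adj (g L) (g (j-1))) : False := by
  apply kill_template L S g hgS KILL w hw (fun t => if t ≤ L - j then j + t else L - t)
  · intro t ht
    by_cases h : t ≤ L - j <;> simp [h] <;> omega
  · intro a ha b hb h
    by_cases h1' : a ≤ L - j <;> by_cases h2' : b ≤ L - j <;> simp [h1', h2'] at h <;> omega
  · intro t ht
    rcases lt_trichotomy t (L - j) with h | h | h
    · rw [if_pos (by omega), if_pos (by omega)]
      have e : j + (t + 1) = (j + t) + 1 := by omega
      rw [e]
      exact hadjg (j + t) (by omega)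
    · rw [if_pos (by omega), if_neg (by omega)]
      have e1 : j + t = L := by omega
      have e2 : L - (t + 1) = j - 1 := by omega
      rw [e1, e2]
      exact h2
    · rw [if_neg (by omega), if_neg (by omega)]
      have e : L - t = (L - (t+1)) + 1 := by omega
      rw [e]
      exact (hadjg (L - (t+1)) (by omega)).symm
  · rw [if_pos (by omega), Nat.add_zero]
    exact h1
  · exact hginj

include KILL hadjg hginj hgS in
lemma k23 (w : V) (hw : w ∉ S) (t : ℕ) (ht1 : 1 ≤ t) (htL : t ≤ L - 1)
    (hwt : G.Adj w (g t)) (j : ℕ) (hj1 : 1 ≤ j) (hjL : j ≤ L)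
    (hadjuu : G.Adj (g 0) (g j)) (hadjv : G.Adj (g L) (g (j-1))) : False := by
  have hL : 1 ≤ L := by omega
  by_cases hc : j ≤ t
  · -- path: w, g t .. g L, g (j-1) .. g 0, g j .. g (t-1)
    apply kill_template L S g hgS KILL w hw
      (fun s => if s ≤ L - t then t + s else if s ≤ L - t + j then L - t + j - s else s + t - L - 1)
    · intro s hs
      by_cases h1' : s ≤ L - t <;> by_cases h2' : s ≤ L - t + j <;> simp [h1', h2'] <;> omega
    · intro a ha b hb h
      by_cases ha1 : a ≤ L - t <;> by_cases ha2 : a ≤ L - t + j <;>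
        by_cases hb1 : b ≤ L - t <;> by_cases hb2 : b ≤ L - t + j <;>
        simp [ha1, ha2, hb1, hb2] at h <;> omega
    · intro s hs
      rcases lt_trichotomy s (L - t) with h | h | h
      · rw [if_pos (by omega), if_pos (by omega)]
        have e : t + (s + 1) = (t + s) + 1 := by omega
        rw [e]
        exact hadjg (t + s) (by omega)
      · rw [if_pos (by omega), if_neg (by omega), if_pos (by omega)]
        have e1 : t + s = L := by omega
        have e2 : L - t + j - (s + 1) = j - 1 := by omega
        rw [e1, e2]
        exact hadjv
      · rcases lt_trichotomy s (L - t + j) with h' | h' | h'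
        · rw [if_neg (by omega), if_pos (by omega), if_neg (by omega), if_pos (by omega)]
          have e : L - t + j - s = (L - t + j - (s+1)) + 1 := by omega
          rw [e]
          exact (hadjg (L - t + j - (s+1)) (by omega)).symm
        · rw [if_neg (by omega), if_pos (by omega), if_neg (by omega), if_neg (by omega)]
          have e1 : L - t + j - s = 0 := by omega
          have e2 : s + 1 + t - L - 1 = j := by omega
          rw [e1, e2]
          exact hadjuu
        · rw [if_neg (by omega), if_neg (by omega), if_neg (by omega), if_neg (by omega)]
          have e : s + 1 + t - L - 1 = (s + t - L - 1) + 1 := by omega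
          rw [e]
          exact hadjg (s + t - L - 1) (by omega)
    · rw [if_pos (by omega), Nat.add_zero]
      exact hwt
    · exact hginj
  · -- t < j; path: w, g t .. g 0, g j .. g L, g (j-1) .. g (t+1)
    apply kill_template L S g hgS KILL w hw
      (fun s => if s ≤ t then t - s else if s ≤ t + 1 + L - j then j + s - t - 1 else t + L + 1 - s)
    · intro s hs
      by_cases h1' : s ≤ t <;> by_cases h2' : s ≤ t + 1 + L - j <;> simp [h1', h2'] <;> omega
    · intro a ha b hb h
      by_cases ha1 : a ≤ t <;> by_cases ha2 : a ≤ t + 1 + L - j <;>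
        by_cases hb1 : b ≤ t <;> by_cases hb2 : b ≤ t + 1 + L - j <;>
        simp [ha1, ha2, hb1, hb2] at h <;> omega
    · intro s hs
      rcases lt_trichotomy s t with h | h | h
      · rw [if_pos (by omega), if_pos (by omega)]
        have e : t - s = (t - (s+1)) + 1 := by omega
        rw [e]
        exact (hadjg (t - (s+1)) (by omega)).symm
      · rw [if_pos (by omega), if_neg (by omega), if_pos (by omega)]
        have e1 : t - s = 0 := by omega
        have e2 : j + (s + 1) - t - 1 = j := by omega
        rw [e1, e2]
        exact hadjuu
      · rcases lt_trichotomy s (t + 1 + L - j) with h' | h' | h'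
        · rw [if_neg (by omega), if_pos (by omega), if_neg (by omega), if_pos (by omega)]
          have e : j + (s+1) - t - 1 = (j + s - t - 1) + 1 := by omega
          rw [e]
          exact hadjg (j + s - t - 1) (by omega)
        · rw [if_neg (by omega), if_pos (by omega), if_neg (by omega), if_neg (by omega)]
          have e1 : j + s - t - 1 = L := by omega
          have e2 : t + L + 1 - (s + 1) = j - 1 := by omega
          rw [e1, e2]
          exact hadjv
        · rw [if_neg (by omega), if_neg (by omega), if_neg (by omega), if_neg (by omega)]
          have e : t + L + 1 - s = (t + L + 1 - (s + 1)) + 1 := by omega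
          rw [e]
          exact (hadjg (t + L + 1 - (s+1)) (by omega)).symm
    · rw [if_pos (by omega)]
      simpa using hwt
    · exact hginj

end kills

lemma support_getElem_eq_getVert' {u v : V} (w : G.Walk u v) (i : ℕ) (h : i < w.support.length) :
    w.support[i]'h = w.getVert i := by
  induction w generalizing i with
  | nil =>
    simp only [Walk.support_nil, List.length_cons, List.length_nil] at h
    interval_cases i
    rfl
  | cons hadj q ih =>
    cases i with
    | zero => rfl
    | succ n =>
      simp only [Walk.support_cons, List.getElem_cons_succ, Walk.getVert_cons_succ]
      exact ih n (by simpa [Walk.support_cons] using h)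

lemma treegen (G : SimpleGraph V) (r : V) (parent : V → V) (rank : V → ℕ)
    (h1 : ∀ x, x ≠ r → G.Adj (parent x) x) (h2 : ∀ x, x ≠ r → rank (parent x) < rank x) :
    ∃ T : SimpleGraph V, T ≤ G ∧ T.IsTree ∧
      {x : V | (T.neighborSet x).ncard = 1} ⊆ {r} ∪ {x | ∀ y, y ≠ r → parent y ≠ x} := by
  classical
  set E : Set (Sym2 V) := {e | ∃ x, x ≠ r ∧ e = s(x, parent x)} with hE
  set T : SimpleGraph V := SimpleGraph.fromEdgeSet E with hT
  have hmk : ∀ x, x ≠ r → T.Adj x (parent x) := by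
    intro x hx
    rw [hT, fromEdgeSet_adj]
    exact ⟨⟨x, hx, rfl⟩, (h1 x hx).ne'⟩
  have hdec : ∀ a b, T.Adj a b → (b = parent a ∧ a ≠ r) ∨ (a = parent b ∧ b ≠ r) := by
    intro a b hab
    rw [hT, fromEdgeSet_adj] at hab
    obtain ⟨⟨x, hx, he⟩, hne⟩ := hab
    rw [Sym2.eq_iff] at he
    rcases he with ⟨rfl, rfl⟩ | ⟨rfl, rfl⟩
    · exact Or.inl ⟨rfl, hx⟩
    · exact Or.inr ⟨rfl, hx⟩
  have hle : T ≤ G := by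
    intro a b hab
    rcases hdec a b hab with ⟨hb, ha⟩ | ⟨ha, hb⟩
    · exact hb ▸ (h1 a ha).symm
    · exact ha ▸ (h1 b hb)
  have hreach : ∀ n (x : V), rank x ≤ n → T.Reachable x r := by
    intro n
    induction n with
    | zero =>
      intro x hx
      by_cases h : x = r
      · subst h; exact Reachable.refl _
      · exact absurd (h2 x h) (by omega)
    | succ n ih =>
      intro x hx
      by_cases h : x = r
      · subst h; exact Reachable.refl _
      · exact ((hmk x h).reachable).trans (ih (parent x) (by have := h2 x h; omega))
  have hconnT : T.Connected := by
    rw [connected_iff]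
    exact ⟨fun a b => (hreach _ a le_rfl).trans (hreach _ b le_rfl).symm, ⟨r⟩⟩
  have hacyc : T.IsAcyclic := by
    intro x c hc
    have hsupne : x ∈ c.support := Walk.start_mem_support c
    obtain ⟨x', hx'm, hmax⟩ := Finset.exists_max_image c.support.toFinset rank
      ⟨x, by simpa using hsupne⟩
    have hx'sup : x' ∈ c.support := by simpa using hx'm
    set c' := c.rotate x' hx'sup with hc'def
    have hc' : c'.IsCycle := hc.rotate hx'sup
    have hlen3 : 3 ≤ c'.length := hc'.three_le_length
    have hsuplen : c'.support.length = c'.length + 1 := Walk.length_support c'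
    -- membership transfer
    have hmemc : ∀ y, y ∈ c'.support → y ∈ c.support := by
      intro y hy
      rcases (Walk.mem_support_iff c').1 hy with h | h
      · exact h ▸ hx'sup
      · exact List.mem_of_mem_tail (((Walk.support_rotate c x' hx'sup).mem_iff).1 h)
    have hrank : ∀ y, y ∈ c'.support → rank y ≤ rank x' := by
      intro y hy
      exact hmax y (by simpa using hmemc y hy)
    set y₁ := c'.getVert 1 with hy₁
    set y₂ := c'.getVert (c'.length - 1) with hy₂
    have hT1 : T.Adj x' y₁ := by
      have := c'.adj_getVert_succ (i := 0) (by omega)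
      simpa using this
    have hT2 : T.Adj y₂ x' := by
      have := c'.adj_getVert_succ (i := c'.length - 1) (by omega)
      rw [show c'.length - 1 + 1 = c'.length by omega, Walk.getVert_length] at this
      exact this
    have hmem1 : y₁ ∈ c'.support := by
      rw [hy₁, ← support_getElem_eq_getVert' c' 1 (by omega)]
      exact List.getElem_mem _
    have hmem2 : y₂ ∈ c'.support := by
      rw [hy₂, ← support_getElem_eq_getVert' c' (c'.length - 1) (by omega)]
      exact List.getElem_mem _
    have hp1 : y₁ = parent x' := by
      rcases hdec x' y₁ hT1 with ⟨h, _⟩ | ⟨h, hy⟩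
      · exact h
      · have := h2 y₁ hy
        rw [← h] at this
        exact absurd (hrank y₁ hmem1) (by omega)
    have hp2 : y₂ = parent x' := by
      rcases hdec y₂ x' hT2 with ⟨h, hy⟩ | ⟨h, _⟩
      · have := h2 y₂ hy
        rw [← h] at this
        exact absurd (hrank y₂ hmem2) (by omega)
      · exact h
    -- y₁ ≠ y₂ from nodup tail
    have htail : c'.support.tail.Nodup := hc'.support_nodup
    have htlen : c'.support.tail.length = c'.length := by
      rw [List.length_tail, hsuplen]
      omega
    have he1 : c'.support.tail[0]'(by omega) = y₁ := by
      rw [List.getElem_tail, support_getElem_eq_getVert']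
    have he2 : c'.support.tail[c'.length - 2]'(by omega) = y₂ := by
      rw [List.getElem_tail, support_getElem_eq_getVert']
      congr 1
      omega
    have : (0 : ℕ) = c'.length - 2 := by
      rw [← htail.getElem_inj_iff]
      rw [he1, he2, hp1, hp2]
      all_goals omega
    omega
  refine ⟨T, hle, ⟨hconnT, hacyc⟩, ?_⟩
  intro x hx
  by_contra hcon
  simp only [Set.mem_union, Set.mem_setOf_eq, Set.mem_singleton_iff, not_or, not_forall] at hcon
  obtain ⟨hxr, y, hyr, hpy⟩ := hcon
  have hpy : parent y = x := by tauto
  have hT_par : T.Adj x (parent x) := hmk x hxr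
  have hT_child : T.Adj x y := (hpy ▸ hmk y hyr).symm
  have hne : parent x ≠ y := by
    intro h
    have h1' := h2 x hxr
    have h2' := h2 y hyr
    rw [hpy] at h2'
    rw [h] at h1'
    omega
  have h2card : 1 < (T.neighborSet x).ncard := by
    rw [Set.one_lt_ncard_iff (Set.toFinite _)]
    exact ⟨parent x, y, hT_par, hT_child, hne⟩
  simp only [Set.mem_setOf_eq] at hx
  omega


variable {V : Type*} [Fintype V] {G : SimpleGraph V}

lemma tree_bound (k : ℕ)
    (hnotree : ¬G.HasSpanningKEndedTree k) (hconn : G.Connected)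
    (f : ℕ → V) (L : ℕ) (u v : V)
    (H1 : ∀ j < L, G.Adj (f j) (f (j+1)))
    (H2 : Set.InjOn f (Set.Iic L)) (Hu : f 0 = u) (Hv : f L = v)
    (S : Set V) (hS : S = f '' Set.Iic L) :
    (k + 1 ≤ 2 + Sᶜ.ncard) ∧
    (∀ a b : V, a ∉ S → b ∉ S → G.Adj a b → G.dist b u ≤ G.dist a u →
      k + 1 ≤ 1 + Sᶜ.ncard) := by
  classical
  have hu_mem : u ∈ S := hS ▸ ⟨0, by simp, Hu⟩
  have hmem : ∀ x ∈ S, ∃ j, j ≤ L ∧ f j = x := by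
    intro x hx
    rw [hS] at hx
    obtain ⟨j, hj, rfl⟩ := hx
    exact ⟨j, Set.mem_Iic.1 hj, rfl⟩
  set idx : V → ℕ := fun x => if hx : x ∈ S then (hmem x hx).choose else 0 with hidxdef
  have hidx : ∀ x, (hx : x ∈ S) → idx x ≤ L ∧ f (idx x) = x := by
    intro x hx
    simp only [hidxdef, dif_pos hx]
    exact (hmem x hx).choose_spec
  have hidxf : ∀ j, j ≤ L → idx (f j) = j := by
    intro j hj
    have hfj : f j ∈ S := hS ▸ ⟨j, Set.mem_Iic.2 hj, rfl⟩
    obtain ⟨h1, h2⟩ := hidx _ hfj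
    exact H2 (Set.mem_Iic.2 h1) (Set.mem_Iic.2 hj) h2
  have hidx0 : ∀ x, (hx : x ∈ S) → x ≠ u → 1 ≤ idx x := by
    intro x hx hxu
    rcases Nat.eq_zero_or_pos (idx x) with h | h
    · exfalso; apply hxu
      have := (hidx x hx).2
      rw [h] at this
      rw [← this, Hu]
    · exact h
  have hdesc : ∀ x, x ≠ u → ∃ y, G.Adj y x ∧ G.dist y u < G.dist x u := by
    intro x hx
    obtain ⟨q, hq⟩ := hconn.exists_walk_length_eq_dist x u
    cases q with
    | nil => exact absurd rfl hx
    | cons h q' =>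
      refine ⟨_, h.symm, ?_⟩
      have h1 := SimpleGraph.dist_le q'
      rw [← hq, SimpleGraph.Walk.length_cons]
      omega
  have hdistpos : ∀ x, x ≠ u → 1 ≤ G.dist x u := fun x hx => hconn.pos_dist_of_ne hx
  -- child transfer
  have hchild : ∀ parent : V → V, (∀ y, y ∈ S → y ≠ u → parent y = f (idx y - 1)) →
      ∀ x, x ∈ S → x ≠ v → ∃ y, y ≠ u ∧ parent y = x := by
    intro parent hpar x hxS hxv
    obtain ⟨hjL, hjx⟩ := hidx x hxS
    set j := idx x with hj
    have hjL' : j < L := by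
      rcases Nat.lt_or_ge j L with h | h
      · exact h
      · exfalso; apply hxv
        have : j = L := by omega
        rw [← hjx, this, Hv]
    have hchS : f (j+1) ∈ S := hS ▸ ⟨j+1, Set.mem_Iic.2 (by omega), rfl⟩
    have hchu : f (j+1) ≠ u := by
      intro h
      rw [← Hu] at h
      have := H2 (Set.mem_Iic.2 (by omega : j + 1 ≤ L)) (Set.mem_Iic.2 (by omega : 0 ≤ L)) h
      omega
    refine ⟨f (j+1), hchu, ?_⟩
    rw [hpar _ hchS hchu, hidxf (j+1) (by omega)]
    simpa using hjx
  have hcnt : ∀ (T : SimpleGraph V), T ≤ G → T.IsTree →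
      ∀ (W' : Set V), {x : V | (T.neighborSet x).ncard = 1} ⊆ ({u, v} ∪ W') →
      k + 1 ≤ 2 + W'.ncard := by
    intro T hTle hTtree W' hsub
    have hno : ¬ ({x : V | (T.neighborSet x).ncard = 1}.ncard ≤ k) := by
      intro hle
      exact hnotree ⟨T, hTle, hTtree, hle⟩
    have hle2 : {x : V | (T.neighborSet x).ncard = 1}.ncard ≤ 2 + W'.ncard := by
      calc {x : V | (T.neighborSet x).ncard = 1}.ncard
          ≤ ({u, v} ∪ W').ncard := Set.ncard_le_ncard hsub (Set.toFinite _)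
        _ ≤ ({u, v} : Set V).ncard + W'.ncard := Set.ncard_union_le _ _
        _ ≤ 2 + W'.ncard := by
            have h1 : ({u, v} : Set V).ncard ≤ 2 := by
              apply le_trans (Set.ncard_insert_le _ _)
              simp
            omega
    omega
  constructor
  · -- basic bound
    set parent : V → V := fun x =>
      if hx : x ∈ S then (if x = u then u else f (idx x - 1))
      else (hdesc x (fun h => hx (by rw [h]; exact hu_mem))).choose with hpardef
    set rank : V → ℕ := fun x => if x ∈ S then idx x else L + G.dist x u with hrankdef
    have hparS : ∀ y, y ∈ S → y ≠ u → parent y = f (idx y - 1) := by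
      intro y hy hyu
      simp only [hpardef, dif_pos hy, if_neg hyu]
    have h1 : ∀ x, x ≠ u → G.Adj (parent x) x := by
      intro x hxu
      by_cases hx : x ∈ S
      · rw [hparS x hx hxu]
        have h1' := hidx0 x hx hxu
        have h2' := (hidx x hx).1
        have := H1 (idx x - 1) (by omega)
        rw [show idx x - 1 + 1 = idx x by omega] at this
        rw [(hidx x hx).2] at this
        exact this
      · simp only [hpardef, dif_neg hx]
        exact (hdesc x (fun h => hx (by rw [h]; exact hu_mem))).choose_spec.1
    have h2 : ∀ x, x ≠ u → rank (parent x) < rank x := by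
      intro x hxu
      by_cases hx : x ∈ S
      · rw [hparS x hx hxu]
        have h1' := hidx0 x hx hxu
        have h2' := (hidx x hx).1
        have hpS : f (idx x - 1) ∈ S := hS ▸ ⟨idx x - 1, Set.mem_Iic.2 (by omega), rfl⟩
        simp only [hrankdef, if_pos hx, if_pos hpS]
        rw [hidxf _ (by omega)]
        omega
      · have hspec := (hdesc x (fun h => hx (by rw [h]; exact hu_mem))).choose_spec
        set y := (hdesc x (fun h => hx (by rw [h]; exact hu_mem))).choose with hy
        have hxpar : parent x = y := by
          simp only [hpardef, dif_neg hx]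
          rfl
        rw [hxpar]
        have hdx : 1 ≤ G.dist x u := hdistpos x hxu
        by_cases hyS : y ∈ S
        · simp only [hrankdef, if_pos hyS, if_neg hx]
          have := (hidx y hyS).1
          omega
        · simp only [hrankdef, if_neg hyS, if_neg hx]
          omega
    obtain ⟨T, hTle, hTtree, hTleaf⟩ := treegen G u parent rank h1 h2
    apply hcnt T hTle hTtree Sᶜ
    intro x hx
    rcases hTleaf hx with h | h
    · left; left; exact h
    · simp only [Set.mem_setOf_eq] at h
      by_cases hxS : x ∈ S
      · by_cases hxv : x = v
        · left; right; exact hxv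
        · exfalso
          obtain ⟨y, hyu, hyp⟩ := hchild parent hparS x hxS hxv
          exact h y hyu hyp
      · right; exact hxS
  · -- with extra W-edge
    intro a b haS hbS hab hdist
    set parent : V → V := fun x =>
      if hx : x ∈ S then (if x = u then u else f (idx x - 1))
      else if x = a then b else (hdesc x (fun h => hx (by rw [h]; exact hu_mem))).choose
      with hpardef
    set rank : V → ℕ := fun x =>
      if x ∈ S then idx x else L + 2 * G.dist x u + (if x = a then 1 else 0) with hrankdef
    have hparS : ∀ y, y ∈ S → y ≠ u → parent y = f (idx y - 1) := by
      intro y hy hyu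
      simp only [hpardef, dif_pos hy, if_neg hyu]
    have hane : ∀ x, x ∉ S → x ≠ u := by
      intro x hx h
      exact hx (by rw [h]; exact hu_mem)
    have h1 : ∀ x, x ≠ u → G.Adj (parent x) x := by
      intro x hxu
      by_cases hx : x ∈ S
      · rw [hparS x hx hxu]
        have h1' := hidx0 x hx hxu
        have h2' := (hidx x hx).1
        have := H1 (idx x - 1) (by omega)
        rw [show idx x - 1 + 1 = idx x by omega] at this
        rw [(hidx x hx).2] at this
        exact this
      · by_cases hxa : x = a
        · have hxpar : parent x = b := by
            simp only [hpardef, dif_neg hx, if_pos hxa]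
          rw [hxpar, hxa]
          exact hab.symm
        · simp only [hpardef, dif_neg hx, if_neg hxa]
          exact (hdesc x (fun h => hx (by rw [h]; exact hu_mem))).choose_spec.1
    have h2 : ∀ x, x ≠ u → rank (parent x) < rank x := by
      intro x hxu
      by_cases hx : x ∈ S
      · rw [hparS x hx hxu]
        have h1' := hidx0 x hx hxu
        have h2' := (hidx x hx).1
        have hpS : f (idx x - 1) ∈ S := hS ▸ ⟨idx x - 1, Set.mem_Iic.2 (by omega), rfl⟩
        simp only [hrankdef, if_pos hx, if_pos hpS]
        rw [hidxf _ (by omega)]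
        omega
      · have hdx : 1 ≤ G.dist x u := hdistpos x hxu
        by_cases hxa : x = a
        · have hxpar : parent x = b := by
            simp only [hpardef, dif_neg hx, if_pos hxa]
          rw [hxpar]
          have hba : b ≠ a := hab.ne'
          simp only [hrankdef, if_neg hbS, if_neg hx, if_neg hba, if_pos hxa]
          rw [hxa]
          omega
        · have hspec := (hdesc x (fun h => hx (by rw [h]; exact hu_mem))).choose_spec
          set y := (hdesc x (fun h => hx (by rw [h]; exact hu_mem))).choose with hy
          have hxpar : parent x = y := by
            simp only [hpardef, dif_neg hx, if_neg hxa]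
            rfl
          rw [hxpar]
          by_cases hyS : y ∈ S
          · simp only [hrankdef, if_pos hyS, if_neg hx, if_neg hxa]
            have := (hidx y hyS).1
            omega
          · simp only [hrankdef, if_neg hyS, if_neg hx, if_neg hxa]
            have hlt := hspec.2
            split_ifs <;> omega
    obtain ⟨T, hTle, hTtree, hTleaf⟩ := treegen G u parent rank h1 h2
    have hbW : b ∈ Sᶜ := hbS
    have hWcard : 1 ≤ Sᶜ.ncard := (Set.ncard_pos (Set.toFinite _)).2 ⟨b, hbW⟩
    have := hcnt T hTle hTtree (Sᶜ \ {b}) ?_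
    · have hdiff : (Sᶜ \ {b}).ncard = Sᶜ.ncard - 1 := Set.ncard_diff_singleton_of_mem hbW
      omega
    intro x hx
    rcases hTleaf hx with h | h
    · left; left; exact h
    · simp only [Set.mem_setOf_eq] at h
      by_cases hxS : x ∈ S
      · by_cases hxv : x = v
        · left; right; exact hxv
        · exfalso
          obtain ⟨y, hyu, hyp⟩ := hchild parent hparS x hxS hxv
          exact h y hyu hyp
      · right
        refine ⟨hxS, ?_⟩
        intro hxb
        simp only [Set.mem_singleton_iff] at hxb
        subst hxb
        have hau : a ≠ u := hane a haS
        have hpa : parent a = x := by simp [hpardef, haS]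
        exact h a hau hpa

lemma main_contra (k : ℕ) (hk : 2 ≤ k) (hconn : G.Connected)
    (hσ : ∀ a b : V, a ≠ b → ¬G.Adj a b →
      (Fintype.card V : ℤ) - k ≤ (G.deg' a : ℤ) + (G.deg' b : ℤ))
    (hnotree : ¬G.HasSpanningKEndedTree k)
    (u v : V) (f : ℕ → V) (L : ℕ)
    (H1 : ∀ j < L, G.Adj (f j) (f (j+1)))
    (H2 : Set.InjOn f (Set.Iic L))
    (Hu : f 0 = u) (Hv : f L = v)
    (KILL : ∀ g' : ℕ → V, (∀ j < L + 1, G.Adj (g' j) (g' (j+1))) →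
      Set.InjOn g' (Set.Iic (L+1)) → False)
    (i : ℕ) (hiL : i + 1 ≤ L) (c1 : G.Adj v (f i)) (c2 : G.Adj v (f (i+1))) : False := by
  classical
  set S : Set V := f '' Set.Iic L with hS
  have hfS : ∀ j ≤ L, f j ∈ S := fun j hj => ⟨j, Set.mem_Iic.2 hj, rfl⟩
  have hScard : S.ncard = L + 1 := by
    rw [hS, Set.ncard_image_of_injOn H2, ← Finset.coe_Iic, Set.ncard_coe_finset, Nat.card_Iic]
  have hfsurj := enum_surj S L f H2 hfS hScard
  have hcard : Fintype.card V = L + 1 + Sᶜ.ncard := by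
    have h := Set.ncard_add_ncard_compl S
    rw [hScard, Nat.card_eq_fintype_card] at h
    omega
  have hfne : ∀ a, a ≤ L → ∀ b, b ≤ L → f a = f b → a = b := fun a ha b hb h =>
    H2 (Set.mem_Iic.2 ha) (Set.mem_Iic.2 hb) h
  have huS : u ∈ S := Hu ▸ hfS 0 (by omega)
  have hi2L : i + 2 ≤ L := by
    rcases Nat.lt_or_ge (i+1) L with h | h
    · omega
    · exfalso
      have : i + 1 = L := by omega
      rw [this, Hv] at c2
      exact G.loopless.irrefl v c2
  have hL2 : 2 ≤ L := by omega
  obtain ⟨hTB1, hTB2⟩ := tree_bound k hnotree hconn f L u v H1 H2 Hu Hv S hS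
  have hNu : ∀ x, x ∉ S → ¬ G.Adj x u := by
    intro x hx
    rw [← Hu]
    exact start_ext L S f KILL H1 H2 hfS x hx
  have hNv : ∀ x, x ∉ S → ¬ G.Adj x v := by
    intro x hx h
    exact end_ext L S f KILL H1 H2 hfS x hx (Hv ▸ h.symm)
  -- boundary vertex
  obtain ⟨w₀, hw₀⟩ := (Set.ncard_pos (Set.toFinite Sᶜ)).1 (by omega : 0 < Sᶜ.ncard)
  obtain ⟨w₁, y, hw₁S, hyS, hadj₁⟩ := boundary_edge S hw₀ huS (hconn w₀ u)
  obtain ⟨t, htL, hty⟩ := hfsurj y hyS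
  have hadjt : G.Adj w₁ (f t) := hty ▸ hadj₁
  have ht1 : 1 ≤ t := by
    rcases Nat.eq_zero_or_pos t with h | h
    · exfalso
      rw [h, Hu] at hadjt
      exact hNu w₁ hw₁S hadjt
    · exact h
  have htL1 : t ≤ L - 1 := by
    rcases Nat.lt_or_ge t L with h | h
    · omega
    · exfalso
      have : t = L := by omega
      rw [this, Hv] at hadjt
      exact hNv w₁ hw₁S hadjt
  -- (u,v) partition
  have hNuS : ∀ x, G.Adj u x → x ∈ S := by
    intro x hx
    by_contra hxS
    exact hNu x hxS hx.symm
  have hNvS : ∀ x, G.Adj v x → x ∈ S := by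
    intro x hx
    by_contra hxS
    exact hNv x hxS hx.symm
  have hdisj_uv : ∀ j, 1 ≤ j → j ≤ L → G.Adj u (f j) → G.Adj v (f (j-1)) → False := by
    intro j h1 h2 hu' hv'
    exact k23 L S f KILL H1 H2 hfS w₁ hw₁S t ht1 htL1 hadjt j h1 h2 (Hu ▸ hu') (Hv ▸ hv')
  obtain ⟨hne_uv, hsum_uv, hxor_uv'⟩ := pe_partition k L S u f v u H1 H2 hfS hfsurj Hv
    (by omega) hNuS (by rw [Hu]; exact G.loopless.irrefl u) hNvS hdisj_uv
  have hune : u ≠ v := by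
    intro h
    have := hfne 0 (by omega) L (by omega) (by rw [Hu, Hv, h])
    omega
  have hσuv := hσ u v hune hne_uv
  have hWub : Sᶜ.ncard ≤ k - 1 := by
    have h1 : (Fintype.card V : ℤ) - k ≤ (L : ℤ) := by
      have : (G.deg' u : ℤ) + (G.deg' v : ℤ) ≤ (L : ℤ) := by exact_mod_cast hsum_uv
      omega
    have : Fintype.card V ≤ L + k := by
      have hk0 : (0:ℤ) ≤ k := by positivity
      omega
    omega
  have hWcard : Sᶜ.ncard = k - 1 := by omega
  have hnk : Fintype.card V = L + k := by omega
  have hnkZ : (Fintype.card V : ℤ) - k = (L : ℤ) := by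
    rw [hnk]
    push_cast
    ring
  have hdeg_uv : L ≤ G.deg' u + G.deg' v := by
    have := hσuv
    rw [hnkZ] at this
    exact_mod_cast this
  have hxor_uv := hxor_uv' hdeg_uv
  -- independence of W
  have hWind : ∀ a b, a ∉ S → b ∉ S → ¬G.Adj a b := by
    intro a b haS hbS hab
    rcases le_total (G.dist b u) (G.dist a u) with h | h
    · have := hTB2 a b haS hbS hab h
      omega
    · have := hTB2 b a hbS haS hab.symm h
      omega
  have hNw₁S : ∀ x, G.Adj w₁ x → x ∈ S := by
    intro x hx
    by_contra hxS
    exact hWind w₁ x hw₁S hxS hx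
  have hNw₁0 : ¬ G.Adj w₁ (f 0) := by
    rw [Hu]
    exact fun h => hNu w₁ hw₁S h
  have hdisj_wv : ∀ j, 1 ≤ j → j ≤ L → G.Adj w₁ (f j) → G.Adj v (f (j-1)) → False := by
    intro j h1 h2 hw' hv'
    exact k4 L S f KILL H1 H2 hfS w₁ hw₁S j h1 h2 hw' (Hv ▸ hv')
  obtain ⟨hnadj_wv, hsum_wv, hxor_wv'⟩ := pe_partition k L S u f v w₁ H1 H2 hfS hfsurj Hv
    (by omega) hNw₁S hNw₁0 hNvS hdisj_wv
  have hdeg_wv : L ≤ G.deg' w₁ + G.deg' v := by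
    have hb : w₁ ≠ v := fun h => hw₁S (h ▸ (Hv ▸ hfS L le_rfl))
    have := hσ w₁ v hb hnadj_wv
    rw [hnkZ] at this
    exact_mod_cast this
  have hxor_wv := hxor_wv' hdeg_wv
  have NN : ∀ j, 1 ≤ j → j ≤ L → (G.Adj w₁ (f j) ↔ G.Adj u (f j)) := by
    intro j h1 h2
    rw [hxor_wv j h1 h2, hxor_uv j h1 h2]
  -- rotated-path consequence
  have hQ : ∀ s, 1 ≤ s → s + 2 ≤ L → G.Adj v (f s) →
      (G.Adj w₁ (f (L-1)) ↔ ¬ G.Adj (f (s+1)) v) := by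
    intro s hs1 hs2 hvs
    set g : ℕ → V := fun j => if j ≤ s then f j else f (L + s + 1 - j) with hg
    have hgadj : ∀ j < L, G.Adj (g j) (g (j+1)) := by
      intro j hj
      rcases lt_trichotomy j s with h | h | h
      · rw [hg]
        simp only
        rw [if_pos (by omega), if_pos (by omega)]
        exact H1 j (by omega)
      · rw [hg]
        simp only
        rw [if_pos (by omega), if_neg (by omega), h,
          show L + s + 1 - (s+1) = L by omega, Hv]
        exact hvs.symm
      · rw [hg]
        simp only
        rw [if_neg (by omega), if_neg (by omega),
          show L + s + 1 - j = (L + s + 1 - (j+1)) + 1 by omega]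
        exact (H1 _ (by omega)).symm
    have hginj' : Set.InjOn g (Set.Iic L) := by
      intro a ha b hb hab
      simp only [Set.mem_Iic] at ha hb
      rw [hg] at hab
      simp only at hab
      split_ifs at hab with h1' h2' h2'
      · exact hfne a (by omega) b (by omega) hab
      · have := hfne a (by omega) (L + s + 1 - b) (by omega) hab
        omega
      · have := hfne (L + s + 1 - a) (by omega) b (by omega) hab
        omega
      · have := hfne (L + s + 1 - a) (by omega) (L + s + 1 - b) (by omega) hab
        omega
    have hgS : ∀ j ≤ L, g j ∈ S := by
      intro j hj
      rw [hg]
      simp only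
      split_ifs with h
      · exact hfS j hj
      · exact hfS (L + s + 1 - j) (by omega)
    have hgsurjQ := enum_surj S L g hginj' hgS hScard
    have hgL : g L = f (s+1) := by
      rw [hg]
      simp only
      rw [if_neg (by omega), show L + s + 1 - L = s + 1 by omega]
    have hg0 : g 0 = f 0 := by
      rw [hg]
      simp only
      rw [if_pos (by omega)]
    have hNbS : ∀ x, G.Adj (f (s+1)) x → x ∈ S := by
      intro x hx
      by_contra hxS
      exact end_ext L S g KILL hgadj hginj' hgS x hxS (hgL ▸ hx)
    have hdisjQ : ∀ j, 1 ≤ j → j ≤ L → G.Adj w₁ (g j) → G.Adj (f (s+1)) (g (j-1)) → False := by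
      intro j h1 h2 hw' hb'
      exact k4 L S g KILL hgadj hginj' hgS w₁ hw₁S j h1 h2 hw' (hgL ▸ hb')
    obtain ⟨hnadjQ, hsumQ, hxorQ'⟩ := pe_partition k L S u g (f (s+1)) w₁ hgadj hginj' hgS
      hgsurjQ hgL (by omega) hNw₁S (by rw [hg0]; exact hNw₁0) hNbS hdisjQ
    have hbne : w₁ ≠ f (s+1) := fun h => hw₁S (h ▸ hfS (s+1) (by omega))
    have hdegQ : L ≤ G.deg' w₁ + G.deg' (f (s+1)) := by
      have := hσ w₁ (f (s+1)) hbne hnadjQ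
      rw [hnkZ] at this
      exact_mod_cast this
    have hxorQ := hxorQ' hdegQ (s+2) (by omega) (by omega)
    have e1 : g (s+2) = f (L-1) := by
      rw [hg]
      simp only
      rw [if_neg (by omega)]
      congr 1
      omega
    have e2 : g (s+2-1) = f L := by
      rw [hg]
      simp only
      rw [if_neg (by omega)]
      congr 1
      omega
    rw [e1, e2, Hv] at hxorQ
    exact hxorQ
  have hi1 : 1 ≤ i := by
    rcases Nat.eq_zero_or_pos i with h | h
    · exfalso
      rw [h, Hu] at c1
      exact hne_uv c1.symm
    · exact h
  have hstep6 : ¬ G.Adj w₁ (f (L-1)) := by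
    intro h
    exact (hQ i hi1 (by omega) c1).1 h c2.symm
  have hL3 : 3 ≤ L := by
    by_contra hL'
    have hL2' : L = 2 := by omega
    have h1' : G.Adj u (f 1) := Hu ▸ H1 0 (by omega)
    have h2' := (NN 1 (by omega) (by omega)).2 h1'
    rw [show (1:ℕ) = L - 1 by omega] at h2'
    exact hstep6 h2'
  by_cases hA : G.Adj u (f 2)
  · -- long cycle through w₁ between f 1 and f 2... direct kill
    have hw2 : G.Adj w₁ (f 2) := (NN 2 (by omega) (by omega)).2 hA
    have hw1' : G.Adj w₁ (f 1) := (NN 1 (by omega) (by omega)).2 (Hu ▸ H1 0 (by omega))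
    apply KILL (fun t' => if t' ≤ 1 then f t' else if t' = 2 then w₁ else f (t' - 1))
    · intro j hj
      rcases Nat.lt_or_ge j 1 with h | h
      · have : j = 0 := by omega
        subst this
        rw [if_pos (by omega), if_pos (by omega)]
        exact H1 0 (by omega)
      · rcases Nat.eq_or_lt_of_le h with h' | h'
        · rw [← h']
          rw [if_pos (by omega), if_neg (by omega), if_pos (by omega)]
          exact hw1'.symm
        · rcases Nat.lt_or_ge j 3 with h'' | h''
          · have : j = 2 := by omega
            subst this
            rw [if_neg (by omega), if_pos rfl, if_neg (by omega), if_neg (by omega)]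
            exact hw2
          · rw [if_neg (by omega), if_neg (by omega), if_neg (by omega), if_neg (by omega),
              show j + 1 - 1 = (j - 1) + 1 by omega]
            exact H1 (j-1) (by omega)
    · have gval1 : ∀ n, n ≤ 1 →
          (if n ≤ 1 then f n else if n = 2 then w₁ else f (n-1)) = f n :=
        fun n h => if_pos h
      have gval2 : (if (2:ℕ) ≤ 1 then f 2 else if (2:ℕ) = 2 then w₁ else f (2-1)) = w₁ := by
        norm_num
      have gval3 : ∀ n, 3 ≤ n →
          (if n ≤ 1 then f n else if n = 2 then w₁ else f (n-1)) = f (n-1) := by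
        intro n h
        rw [if_neg (by omega), if_neg (by omega)]
      intro a ha b hb hab
      simp only [Set.mem_Iic] at ha hb
      dsimp only at hab
      have trich : ∀ n : ℕ, n ≤ 1 ∨ n = 2 ∨ 3 ≤ n := by omega
      rcases trich a with haa | haa | haa <;> rcases trich b with hbb | hbb | hbb
      · rw [gval1 a haa, gval1 b hbb] at hab
        have := hfne a (by omega) b (by omega) hab
        omega
      · subst hbb
        rw [gval1 a haa, gval2] at hab
        exact absurd (hab ▸ hfS a (by omega)) hw₁S
      · rw [gval1 a haa, gval3 b hbb] at hab
        have := hfne a (by omega) (b-1) (by omega) hab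
        omega
      · subst haa
        rw [gval2, gval1 b hbb] at hab
        exact absurd (hab.symm ▸ hfS b (by omega)) hw₁S
      · omega
      · subst haa
        rw [gval2, gval3 b hbb] at hab
        exact absurd (hab.symm ▸ hfS (b-1) (by omega)) hw₁S
      · rw [gval3 a haa, gval1 b hbb] at hab
        have := hfne (a-1) (by omega) b (by omega) hab
        omega
      · subst hbb
        rw [gval3 a haa, gval2] at hab
        exact absurd (hab ▸ hfS (a-1) (by omega)) hw₁S
      · rw [gval3 a haa, gval3 b hbb] at hab
        have := hfne (a-1) (by omega) (b-1) (by omega) hab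
        omega
  · have hv1 : G.Adj v (f 1) := by
      have h := hxor_uv 2 (by omega) (by omega)
      by_contra hcon
      exact hA (h.2 (by simpa using hcon))
    have hvall : ∀ s, 1 ≤ s → s ≤ L - 1 → G.Adj v (f s) := by
      intro s
      induction s with
      | zero => omega
      | succ n ih =>
        intro h1 h2
        rcases Nat.eq_zero_or_pos n with h | h
        · subst h
          exact hv1
        · have hvn := ih h (by omega)
          by_contra hcon
          have : ¬ G.Adj (f (n+1)) v := fun h' => hcon h'.symm
          exact hstep6 ((hQ n h (by omega) hvn).2 this)
    have hNu1 : ∀ j, 2 ≤ j → j ≤ L → ¬G.Adj u (f j) := by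
      intro j h2' hL' hadj'
      exact (hxor_uv j (by omega) hL').1 hadj' (hvall (j-1) (by omega) (by omega))
    have hu1 : G.Adj u (f 1) := Hu ▸ H1 0 (by omega)
    have hdegu : G.deg' u = 1 := by
      have hset : G.neighborSet u = {f 1} := by
        ext x
        simp only [mem_neighborSet, Set.mem_singleton_iff]
        constructor
        · intro hx
          obtain ⟨j, hj, rfl⟩ := hfsurj x (hNuS x hx)
          have hj0 : j ≠ 0 := by
            rintro rfl
            rw [Hu] at hx
            exact G.loopless.irrefl u hx
          have hj1 : j = 1 := by
            by_contra h'
            exact hNu1 j (by omega) hj hx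
          rw [hj1]
        · rintro rfl
          exact hu1
      rw [SimpleGraph.deg', hset, Set.ncard_singleton]
    have hdegw : G.deg' w₁ = 1 := by
      have hset : G.neighborSet w₁ = {f 1} := by
        ext x
        simp only [mem_neighborSet, Set.mem_singleton_iff]
        constructor
        · intro hx
          obtain ⟨j, hj, rfl⟩ := hfsurj x (hNw₁S x hx)
          have hj0 : j ≠ 0 := fun h => hNw₁0 (h ▸ hx)
          have hadju : G.Adj u (f j) := (NN j (by omega) hj).1 hx
          have hj1 : j = 1 := by
            by_contra h'
            exact hNu1 j (by omega) hj hadju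
          rw [hj1]
        · rintro rfl
          exact (NN 1 (by omega) (by omega)).2 hu1
      rw [SimpleGraph.deg', hset, Set.ncard_singleton]
    have hw₁u : u ≠ w₁ := fun h => hw₁S (h ▸ huS)
    have hnadj_uw : ¬G.Adj u w₁ := fun h => hNu w₁ hw₁S h.symm
    have hfin := hσ u w₁ hw₁u hnadj_uw
    rw [hnkZ, hdegu, hdegw] at hfin
    have : (L : ℤ) ≤ 2 := by exact_mod_cast hfin
    omega

end Aux14

theorem stmt_14 {V : Type*} [Fintype V] (G : SimpleGraph V) (k : ℕ) (hk : 2 ≤ k)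
    (hconn : G.Connected)
    (hσ : ∀ u v : V, u ≠ v → ¬G.Adj u v →
      (Fintype.card V : ℤ) - k ≤ (G.deg' u : ℤ) + (G.deg' v : ℤ))
    (hnotree : ¬G.HasSpanningKEndedTree k)
    (u v : V) (p : G.Walk u v) (hp : p.IsPath)
    (hlongest : ∀ (a b : V) (q : G.Walk a b), q.IsPath → q.length ≤ p.length) :
    ∀ i : ℕ, (h : i + 1 < p.support.length) →
      ¬(G.Adj v (p.support[i]'(Nat.lt_of_succ_lt h)) ∧ G.Adj v (p.support[i + 1]'h)) := by
  intro i h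
  rintro ⟨c1, c2⟩
  have hsuplen : p.support.length = p.length + 1 := SimpleGraph.Walk.length_support p
  set L := p.length with hL
  have hiL : i + 1 ≤ L := by omega
  have H1 : ∀ j < L, G.Adj (p.getVert j) (p.getVert (j+1)) := fun j hj => p.adj_getVert_succ hj
  have H2 : Set.InjOn p.getVert (Set.Iic L) := by
    intro a ha b hb hab
    simp only [Set.mem_Iic] at ha hb
    have ea : p.support[a]'(by omega) = p.getVert a :=
      Aux14.support_getElem_eq_getVert' p a (by omega)
    have eb : p.support[b]'(by omega) = p.getVert b :=
      Aux14.support_getElem_eq_getVert' p b (by omega)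
    exact hp.support_nodup.getElem_inj_iff.mp (by rw [ea, eb, hab])
  have KILL : ∀ g' : ℕ → V, (∀ j < L + 1, G.Adj (g' j) (g' (j+1))) →
      Set.InjOn g' (Set.Iic (L+1)) → False := by
    intro g' hadj hinj
    obtain ⟨q, hqlen, hqsup⟩ := Aux14.chain_walk g' (L+1) hadj
    have hqpath : q.IsPath := by
      rw [SimpleGraph.Walk.isPath_def, hqsup]
      refine List.Nodup.map_on ?_ List.nodup_range
      intro x hx y hy hxy
      have hx' : x ≤ L + 1 := by have := List.mem_range.1 hx; omega
      have hy' : y ≤ L + 1 := by have := List.mem_range.1 hy; omega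
      exact hinj (Set.mem_Iic.2 hx') (Set.mem_Iic.2 hy') hxy
    have := hlongest _ _ q hqpath
    omega
  exact Aux14.main_contra k hk hconn hσ hnotree u v p.getVert L H1 H2 p.getVert_zero
    p.getVert_length KILL i hiL
    (by rw [← Aux14.support_getElem_eq_getVert' p i (by omega)]; exact c1)
    (by rw [← Aux14.support_getElem_eq_getVert' p (i+1) (by omega)]; exact c2)
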